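/- For a finite crystallographic simply-laced root system A with Coxeter number h, for any two roots α, β one has Σ_{γ∈A} ⟨α,γ⟩⟨β,γ⟩ = 2h⟨α,β⟩. -/

import Mathlib

open scoped RealInnerProductSpace

/-- For a finite crystallographic simply-laced (ADE) root system `A` with Coxeter
number `h`, for any two roots `α, β` one has `∑_{γ∈A} ⟪α,γ⟫⟪β,γ⟫ = 2h⟪α,β⟫`. -/
theorem sum_inner_mul_inner_eq_two_coxeter_mul
    {V : Type*} [NormedAddCommGroup V] [InnerProductSpace ℝ V]
    [FiniteDimensional ℝ V]
    (A : Finset V) (h : ℕ)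
    (hspan : Submodule.span ℝ (A : Set V) = ⊤)
    (hnorm : ∀ γ ∈ A, ⟪γ, γ⟫ = 2)
    (hrefl : ∀ γ ∈ A, ∀ δ ∈ A, δ - ⟪γ, δ⟫ • γ ∈ A)
    (hcrys : ∀ γ ∈ A, ∀ δ ∈ A, ∃ n : ℤ, ⟪γ, δ⟫ = (n : ℝ))
    (hirr : ∀ S ⊆ A, (∀ γ ∈ S, ∀ δ ∈ A, δ ∉ S → ⟪γ, δ⟫ = 0) → S = ∅ ∨ S = A)
    (hcard : A.card = Module.finrank ℝ V * h)
    (α β : V) (hα : α ∈ A) (hβ : β ∈ A) :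
    ∑ γ ∈ A, ⟪α, γ⟫ * ⟪β, γ⟫ = 2 * (h : ℝ) * ⟪α, β⟫ := by
  classical
  -- The operator T x = ∑ γ ∈ A, ⟪γ, x⟫ • γ
  set T : V →ₗ[ℝ] V :=
    ∑ γ ∈ A, LinearMap.smulRight ((innerSL ℝ γ : V →L[ℝ] ℝ) : V →ₗ[ℝ] ℝ) γ with hTdef
  have hTapp : ∀ x, T x = ∑ γ ∈ A, ⟪γ, x⟫ • γ := by
    intro x
    simp [hTdef, LinearMap.sum_apply]
  have hTinner : ∀ x y, ⟪T x, y⟫ = ∑ γ ∈ A, ⟪γ, x⟫ * ⟪γ, y⟫ := by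
    intro x y
    rw [hTapp, sum_inner]
    exact Finset.sum_congr rfl fun γ _ => real_inner_smul_left _ _ _
  have hsym : T.IsSymmetric := by
    intro x y
    rw [hTinner, real_inner_comm (T y) x, hTinner]
    exact Finset.sum_congr rfl fun γ _ => mul_comm _ _
  -- the reflections
  set s : V → V → V := fun γ x => x - ⟪γ, x⟫ • γ with hsdef
  have hs_inner : ∀ γ ∈ A, ∀ x, ⟪γ, s γ x⟫ = -⟪γ, x⟫ := by
    intro γ hγ x
    simp [hsdef, inner_sub_right, inner_smul_right, hnorm γ hγ]
    rw [← real_inner_self_eq_norm_sq, hnorm γ hγ]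
    ring
  have hs_invol : ∀ γ ∈ A, ∀ x, s γ (s γ x) = x := by
    intro γ hγ x
    simp only [hsdef]
    rw [show ⟪γ, x - ⟪γ, x⟫ • γ⟫ = -⟪γ, x⟫ by
      simpa [hsdef] using hs_inner γ hγ x]
    abel_nf
    simp
  have hs_adj : ∀ γ x y, ⟪s γ x, y⟫ = ⟪x, s γ y⟫ := by
    intro γ x y
    simp only [hsdef, inner_sub_left, inner_sub_right, real_inner_smul_left,
      inner_smul_right]
    rw [real_inner_comm γ x]
    ring
  have hs_mem : ∀ γ ∈ A, ∀ δ ∈ A, s γ δ ∈ A := fun γ hγ δ hδ => hrefl γ hγ δ hδ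
  -- T commutes with each reflection
  have hcomm : ∀ γ ∈ A, ∀ x, T (s γ x) = s γ (T x) := by
    intro γ hγ x
    have key : ∑ δ ∈ A, ⟪δ, s γ x⟫ • δ = ∑ δ ∈ A, ⟪δ, x⟫ • s γ δ := by
      refine Finset.sum_nbij' (fun δ => s γ δ) (fun δ => s γ δ) ?_ ?_ ?_ ?_ ?_
      · intro δ hδ; exact hs_mem γ hγ δ hδ
      · intro δ hδ; exact hs_mem γ hγ δ hδ
      · intro δ hδ; exact hs_invol γ hγ δ
      · intro δ hδ; exact hs_invol γ hγ δ
      · intro δ hδ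
        rw [hs_invol γ hγ δ, ← hs_adj γ δ x]
    rw [hTapp, hTapp, key]
    simp only [hsdef, smul_sub]
    rw [Finset.sum_sub_distrib]
    congr 1
    simp only [smul_smul]
    rw [← Finset.sum_smul, inner_sum]
    congr 1
    exact Finset.sum_congr rfl fun δ _ => by rw [real_inner_smul_right]
  -- each root is orthogonal to any reflection-invariant subspace not containing it
  -- eigenspace dichotomy
  have hdich : ∀ μ : ℝ, Module.End.eigenspace T μ = ⊥ ∨ Module.End.eigenspace T μ = ⊤ := by
    intro μ
    set W := Module.End.eigenspace T μ with hWdef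
    have hWinv : ∀ γ ∈ A, ∀ w ∈ W, s γ w ∈ W := by
      intro γ hγ w hw
      rw [hWdef, Module.End.mem_eigenspace_iff] at hw ⊢
      rw [hcomm γ hγ, hw]
      simp only [hsdef, inner_smul_right, smul_sub, smul_smul]
    have horth : ∀ δ ∈ A, δ ∉ W → ∀ w ∈ W, ⟪δ, w⟫ = 0 := by
      intro δ hδ hδW w hw
      by_contra hne
      apply hδW
      have h1 : w - s δ w ∈ W := sub_mem hw (hWinv δ hδ w hw)
      have h2 : ⟪δ, w⟫ • δ ∈ W := by
        simpa [hsdef] using h1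
      have := W.smul_mem (⟪δ, w⟫)⁻¹ h2
      rwa [smul_smul, inv_mul_cancel₀ hne, one_smul] at this
    set S : Finset V := A.filter (fun δ => δ ∈ W) with hSdef
    have hScase := hirr S (Finset.filter_subset _ _) (by
      intro γ hγ δ hδ hδS
      have hγW : γ ∈ W := (Finset.mem_filter.mp hγ).2
      have hδW : δ ∉ W := fun hmem => hδS (Finset.mem_filter.mpr ⟨hδ, hmem⟩)
      rw [real_inner_comm]
      exact horth δ hδ hδW γ hγW)
    rcases hScase with hS | hS
    · -- all roots orthogonal to W, so W = ⊥
      left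
      have hspanle : Submodule.span ℝ (A : Set V) ≤ Wᗮ := by
        rw [Submodule.span_le]
        intro δ hδ
        have hδA : δ ∈ A := hδ
        have hδW : δ ∉ W := fun hm => by
          have hmem : δ ∈ S := Finset.mem_filter.mpr ⟨hδA, hm⟩
          rw [hS] at hmem
          exact absurd hmem (Finset.notMem_empty δ)
        rw [SetLike.mem_coe, Submodule.mem_orthogonal]
        intro w hw
        rw [real_inner_comm]
        exact horth δ hδA hδW w hw
      rw [hspan, top_le_iff] at hspanle
      have hWle : W ≤ ⊥ := by
        refine le_trans (Submodule.le_orthogonal_orthogonal W) ?_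
        rw [hspanle, Submodule.top_orthogonal_eq_bot]
      exact le_bot_iff.mp hWle
    · -- all roots in W, so W = ⊤
      right
      have : Submodule.span ℝ (A : Set V) ≤ W := by
        rw [Submodule.span_le]
        intro δ hδ
        have : δ ∈ S := hS ▸ hδ
        exact (Finset.mem_filter.mp this).2
      rw [hspan] at this
      exact top_le_iff.mp this
  -- existence of eigenvalue: spectral theorem
  have hsup : (⨆ μ : ℝ, Module.End.eigenspace T μ) = ⊤ := by
    have := hsym.orthogonalComplement_iSup_eigenspaces_eq_bot
    rwa [Submodule.orthogonal_eq_bot_iff] at this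
  have hαne : α ≠ 0 := by
    intro h0
    have := hnorm α hα
    rw [h0] at this
    simp at this
  have hV : Nontrivial V := ⟨α, 0, hαne⟩
  obtain ⟨μ, hμ⟩ : ∃ μ : ℝ, Module.End.eigenspace T μ = ⊤ := by
    by_contra hno
    push_neg at hno
    have : ∀ μ : ℝ, Module.End.eigenspace T μ = ⊥ := fun μ =>
      (hdich μ).resolve_right (hno μ)
    rw [iSup_congr this, iSup_const] at hsup
    exact absurd hsup.symm bot_ne_top.symm
  have hTeq : ∀ x, T x = μ • x := by
    intro x
    have : x ∈ Module.End.eigenspace T μ := hμ ▸ Submodule.mem_top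
    exact Module.End.mem_eigenspace_iff.mp this
  -- trace computation: μ * finrank = 2 * card A
  set n := Module.finrank ℝ V with hn
  have hnpos : 0 < n := Module.finrank_pos
  set b := stdOrthonormalBasis ℝ V with hb
  have htr1 : ∑ i : Fin n, ⟪b i, T (b i)⟫ = μ * n := by
    have : ∀ i : Fin n, ⟪b i, T (b i)⟫ = μ := by
      intro i
      rw [hTeq, real_inner_smul_right, real_inner_self_eq_norm_sq,
        b.orthonormal.1 i]
      norm_num
    rw [Finset.sum_congr rfl fun i _ => this i]
    simp [mul_comm]
  have htr2 : ∑ i : Fin n, ⟪b i, T (b i)⟫ = 2 * A.card := by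
    have step : ∀ i : Fin n, ⟪b i, T (b i)⟫ = ∑ γ ∈ A, ⟪γ, b i⟫ * ⟪b i, γ⟫ := by
      intro i
      rw [hTapp, inner_sum]
      exact Finset.sum_congr rfl fun γ _ => by
        rw [real_inner_smul_right, mul_comm, real_inner_comm]
    rw [Finset.sum_congr rfl fun i _ => step i, Finset.sum_comm]
    rw [Finset.sum_congr rfl fun γ hγ => b.sum_inner_mul_inner γ γ]
    rw [Finset.sum_congr rfl fun γ hγ => hnorm γ hγ]
    rw [Finset.sum_const, nsmul_eq_mul]
    ring
  have hμval : μ = 2 * h := by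
    have heq : μ * n = 2 * (n * h : ℕ) := by
      rw [← htr1, htr2, hcard]
    push_cast at heq
    have hn0 : (n : ℝ) ≠ 0 := Nat.cast_ne_zero.mpr hnpos.ne'
    exact mul_right_cancel₀ hn0 (by linarith : μ * (n : ℝ) = (2 * h) * n)
  -- conclude
  have final : ⟪T α, β⟫ = ∑ γ ∈ A, ⟪α, γ⟫ * ⟪β, γ⟫ := by
    rw [hTinner]
    exact Finset.sum_congr rfl fun γ _ => by
      rw [real_inner_comm γ α, real_inner_comm γ β]
  rw [← final, hTeq, real_inner_smul_left, hμval]
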